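/- In a decreasing consumption MDP, every run must visit a reload state infinitely often or exhaust its resource: if ρ is a d-safe run for some d, and ρ visits reload states only finitely often, then this contradicts d-safety; formally, every d-safe run in a decreasing CMDP visits R infinitely many times. -/

import Mathlib

open scoped Classical NNReal ENat

noncomputable section

/-- A consumption Markov decision process. -/
structure CMDP (S A : Type) [Fintype S] where
  Δ : S → A → S → NNReal
  Δ_sum : ∀ s a, (∑ t, Δ s a t) = 1
  C : S → A → ℕ
  R : Set S
  cap : ℕ

namespace CMDP

variable {S A : Type} [Fintype S]

/-- Strategies map histories (initial state, list of action/state steps) to actions. -/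
abbrev Strat (S A : Type) : Type := S × List (A × S) → A

/-- Last state of a history. -/
def lastState (s : S) : List (A × S) → S
  | [] => s
  | (_, t) :: rest => lastState t rest

/-- The `i`-th state (0-indexed) of a history. -/
def stateAt (s : S) (steps : List (A × S)) (i : ℕ) : S :=
  (s :: steps.map Prod.snd).getD i s

variable (M : CMDP S A)

def Succ (s : S) (a : A) : Set S := {t | 0 < M.Δ s a t}

/-- Total consumption along a finite path. -/
def consAux : S → List (A × S) → ℕ
  | _, [] => 0
  | s, (a, t) :: rest => M.C s a + consAux t rest

/-- One step of the energy-level update. -/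
def levelStep (s : S) (a : A) (l : ℕ) : Option ℕ :=
  if s ∈ M.R then (if M.C s a ≤ M.cap then some (M.cap - M.C s a) else none)
  else (if M.C s a ≤ l then some (l - M.C s a) else none)

def energyFrom : Option ℕ → S → List (A × S) → Option ℕ
  | none, _, _ => none
  | some l, _, [] => some l
  | some l, s, (a, t) :: rest => energyFrom (M.levelStep s a l) t rest

/-- Energy level of a history initialized by `d` (`none` = ⊥, exhaustion). -/
def energy (d : ℕ) (s : S) (steps : List (A × S)) : Option ℕ :=
  M.energyFrom (some d) s steps

/-- Validity of a finite path. -/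
def ValidPath : S → List (A × S) → Prop
  | _, [] => True
  | s, (a, t) :: rest => t ∈ M.Succ s a ∧ ValidPath t rest

/-- First state of a run. -/
def runState (ρ : ℕ → S × A) (i : ℕ) : S := (ρ i).1

/-- The finite prefix of a run with `i` steps. -/
def prefixSteps (ρ : ℕ → S × A) (i : ℕ) : List (A × S) :=
  (List.range i).map fun k => ((ρ k).2, (ρ (k + 1)).1)

def IsRun (ρ : ℕ → S × A) : Prop := ∀ i, (ρ (i + 1)).1 ∈ M.Succ (ρ i).1 (ρ i).2

/-- A run is `d`-safe if the energy level of every finite prefix is defined. -/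
def DSafe (d : ℕ) (ρ : ℕ → S × A) : Prop :=
  ∀ i, M.energy d (runState ρ 0) (prefixSteps ρ i) ≠ none

/-- A run is compatible with a strategy. -/
def Compat (σ : Strat S A) (ρ : ℕ → S × A) : Prop :=
  M.IsRun ρ ∧ ∀ i, (ρ i).2 = σ (runState ρ 0, prefixSteps ρ i)

def CompatFrom (σ : Strat S A) (s : S) (ρ : ℕ → S × A) : Prop :=
  M.Compat σ ρ ∧ runState ρ 0 = s

/-- A strategy is `d`-safe in `s` if all compatible runs from `s` are `d`-safe. -/
def SafeStrat (σ : Strat S A) (d : ℕ) (s : S) : Prop :=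
  ∀ ρ, M.CompatFrom σ s ρ → M.DSafe d ρ

/-- A finite history compatible with a strategy. -/
def CompatHist (σ : Strat S A) (s : S) (steps : List (A × S)) : Prop :=
  M.ValidPath s steps ∧
    ∀ (i : ℕ) (h : i < steps.length), (steps.get ⟨i, h⟩).1 = σ (s, steps.take i)

def Memoryless (σ : Strat S A) : Prop :=
  ∀ h₁ h₂ : S × List (A × S), lastState h₁.1 h₁.2 = lastState h₂.1 h₂.2 → σ h₁ = σ h₂

/-- Cost of a run up to the first visit of `T` (∞ if `T` is never visited). -/
def reachCost (T : Set S) (ρ : ℕ → S × A) : ℕ∞ :=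
  ⨅ i ∈ {i : ℕ | runState ρ i ∈ T}, (M.consAux (runState ρ 0) (prefixSteps ρ i) : ℕ∞)

/-- `i`-step bounded reachability cost. -/
def reachCostBdd (T : Set S) (n : ℕ) (ρ : ℕ → S × A) : ℕ∞ :=
  ⨅ i ∈ {i : ℕ | i ≤ n ∧ runState ρ i ∈ T}, (M.consAux (runState ρ 0) (prefixSteps ρ i) : ℕ∞)

/-- Reachability cost requiring at least one step. -/
def reachCostPlus (T : Set S) (ρ : ℕ → S × A) : ℕ∞ :=
  ⨅ i ∈ {i : ℕ | 1 ≤ i ∧ runState ρ i ∈ T}, (M.consAux (runState ρ 0) (prefixSteps ρ i) : ℕ∞)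

def reachCostStrat (T : Set S) (σ : Strat S A) (s : S) : ℕ∞ :=
  ⨆ ρ ∈ {ρ | M.CompatFrom σ s ρ}, M.reachCost T ρ

def minReach (T : Set S) (s : S) : ℕ∞ :=
  ⨅ σ : Strat S A, M.reachCostStrat T σ s

def minReachBdd (T : Set S) (n : ℕ) (s : S) : ℕ∞ :=
  ⨅ σ : Strat S A, ⨆ ρ ∈ {ρ | M.CompatFrom σ s ρ}, M.reachCostBdd T n ρ

def minReachPlus (T : Set S) (s : S) : ℕ∞ :=
  ⨅ σ : Strat S A, ⨆ ρ ∈ {ρ | M.CompatFrom σ s ρ}, M.reachCostPlus T ρ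

/-- The Bellman operator for minimum cost reachability of `T`. -/
def bellman (T : Set S) (v : S → ℕ∞) : S → ℕ∞ := fun s =>
  if s ∈ T then 0 else ⨅ a : A, ((M.C s a : ℕ∞) + ⨆ t ∈ M.Succ s a, v t)

/-- The initial vector: `0` on `T`, `∞` elsewhere. -/
def xTvec (T : Set S) : S → ℕ∞ := fun s => if s ∈ T then 0 else ⊤

/-- Length of the longest simple path of `M`. -/
def longestSimple : ℕ :=
  sSup {n | ∃ (s : S) (steps : List (A × S)),
    M.ValidPath s steps ∧ (s :: steps.map Prod.snd).Nodup ∧ steps.length = n}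

/-- The augmented CMDP `M̃` with a fresh non-reload copy of every state. -/
def augment : CMDP (S ⊕ S) A where
  Δ := fun x a t =>
    Sum.elim (fun u => M.Δ (Sum.elim id id x) a u) (fun _ => (0 : NNReal)) t
  Δ_sum := by
    intro x a
    rw [Fintype.sum_sum_type]
    simp [M.Δ_sum (Sum.elim id id x) a]
  C := fun x a => M.C (Sum.elim id id x) a
  R := Sum.inl '' M.R
  cap := M.cap

/-- Truncation to `0` on reload states. -/
def strunc (x : S → ℕ∞) : S → ℕ∞ := fun s => if s ∈ M.R then 0 else x s

/-- The truncated Bellman-like operator `G`. -/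
def opG (v : S → ℕ∞) : S → ℕ∞ := fun s =>
  ⨅ a : A, ((M.C s a : ℕ∞) + ⨆ t ∈ M.Succ s a, M.strunc v t)

/-- Minimal `d ≤ cap` such that some strategy is `d`-safe in `s` (∞ if none). -/
def safeVec (s : S) : ℕ∞ :=
  ⨅ d ∈ {d : ℕ | d ≤ M.cap ∧ ∃ σ : Strat S A, M.SafeStrat σ d s}, (d : ℕ∞)

/-- An action safe in a state. -/
def SafeAction (s : S) (a : A) : Prop :=
  (s ∉ M.R ∧ ((M.C s a : ℕ∞) + ⨆ t ∈ M.Succ s a, M.safeVec t) ≤ M.safeVec s) ∨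
  (s ∈ M.R ∧ ((M.C s a : ℕ∞) + ⨆ t ∈ M.Succ s a, M.safeVec t) ≤ (M.cap : ℕ∞))

/-- A CMDP is decreasing if every (valid) simple cycle has positive consumption. -/
def Decreasing : Prop :=
  ∀ (s : S) (steps : List (A × S)), M.ValidPath s steps → steps ≠ [] →
    lastState s steps = s → (s :: (steps.map Prod.snd).dropLast).Nodup →
    0 < M.consAux s steps

/-- Selection according to a selection rule: the action of the largest
element of the domain below the counter value. -/
def selectFrom (φ : ℕ → Option A) (m : ℕ) (a₀ : A) : A :=
  (((List.range (m + 1)).reverse).findSome? φ).getD a₀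

/-- The finite counter strategy `Σ^y` induced by a counter selector. -/
def counterStrategy (sel : S → ℕ → Option A) (y : S → ℕ) (a₀ : A) : Strat S A :=
  fun h =>
    match M.energy (y h.1) h.1 h.2 with
    | some m => selectFrom (sel (lastState h.1 h.2)) m a₀
    | none => a₀

/-- The `SPR` value of an action. -/
def spr (s : S) (a : A) (x : S → ℕ∞) : ℕ∞ :=
  (M.C s a : ℕ∞) +
    ⨅ t ∈ M.Succ s a, max (x t) (⨆ t' ∈ {t' ∈ M.Succ s a | t' ≠ t}, M.safeVec t')

def opA (T : Set S) (x : S → ℕ∞) : S → ℕ∞ := fun s =>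
  if s ∈ T then M.safeVec s else ⨅ a : A, M.spr s a x

/-- Two-sided truncation. -/
def trunc2 (x : S → ℕ∞) : S → ℕ∞ := fun s =>
  if (M.cap : ℕ∞) < x s then ⊤ else if s ∈ M.R then 0 else x s

def opB (T : Set S) (x : S → ℕ∞) : S → ℕ∞ := M.trunc2 (M.opA T x)

def yTvec (T : Set S) : S → ℕ∞ := fun s => if s ∈ T then M.safeVec s else ⊤

def VisitsWithin (T : Set S) (i : ℕ) (ρ : ℕ → S × A) : Prop :=
  ∃ j ≤ i, runState ρ j ∈ T

def Visits (T : Set S) (ρ : ℕ → S × A) : Prop := ∃ j, runState ρ j ∈ T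

/-- Minimal `ℓ ≤ cap` s.t. some `ℓ`-safe strategy from `s` has a run visiting `T`
within the first `i` steps. -/
def safePRBdd (T : Set S) (i : ℕ) (s : S) : ℕ∞ :=
  ⨅ ℓ ∈ {ℓ : ℕ | ℓ ≤ M.cap ∧ ∃ σ : Strat S A, M.SafeStrat σ ℓ s ∧
      ∃ ρ, M.CompatFrom σ s ρ ∧ VisitsWithin T i ρ}, (ℓ : ℕ∞)

/-- Minimal `ℓ ≤ cap` s.t. some `ℓ`-safe strategy from `s` has a run visiting `T`. -/
def safePR (T : Set S) (s : S) : ℕ∞ :=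
  ⨅ ℓ ∈ {ℓ : ℕ | ℓ ≤ M.cap ∧ ∃ σ : Strat S A, M.SafeStrat σ ℓ s ∧
      ∃ ρ, M.CompatFrom σ s ρ ∧ Visits T ρ}, (ℓ : ℕ∞)

/-- Replace the set of reload states. -/
def setReload (R' : Set S) : CMDP S A := { M with R := R' }

/-- Probability of a finite continuation of a history under a strategy. -/
def pathProbAux (σ : Strat S A) : S × List (A × S) → List (A × S) → NNReal
  | _, [] => 1
  | h, (a, t) :: rest =>
      (if σ h = a then M.Δ (lastState h.1 h.2) a t else 0) *
        pathProbAux σ (h.1, h.2 ++ [(a, t)]) rest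

/-- Probability that the length-`n` prefix of a run from `s` under `σ`
satisfies the predicate `P`. -/
def probEvent [Fintype A] (σ : Strat S A) (s : S) (n : ℕ) (P : List (A × S) → Prop) : NNReal :=
  ∑ f : Fin n → A × S,
    if P (List.ofFn f) then M.pathProbAux σ (s, []) (List.ofFn f) else 0

/-- Number of visits of `T` along a finite path. -/
def visitCount (T : Set S) (s : S) (steps : List (A × S)) : ℕ :=
  (s :: steps.map Prod.snd).countP (fun x => decide (x ∈ T))

/-- `T` is visited infinitely often with probability one under `σ` from `s`. -/
def buchiAS [Fintype A] (σ : Strat S A) (s : S) (T : Set S) : Prop :=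
  ∀ k : ℕ,
    (⨆ n : ℕ, M.probEvent σ s n (fun steps => k ≤ visitCount T s steps)) = 1

/-- Minimal `d ≤ cap` s.t. some strategy is `d`-safe in `s` and visits `T`
infinitely often almost surely. -/
def safeBuchiVec [Fintype A] (T : Set S) (s : S) : ℕ∞ :=
  ⨅ d ∈ {d : ℕ | d ≤ M.cap ∧ ∃ σ : Strat S A, M.SafeStrat σ d s ∧ M.buchiAS σ s T}, (d : ℕ∞)

/-- Iterated memory update of a memory structure. -/
def updStar {Mem : Type} (upd : Mem → S → A → S → Mem) : Mem → S → List (A × S) → Mem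
  | m, _, [] => m
  | m, s, (a, t) :: rest => updStar upd (upd m s a t) t rest

/-- Finite-memory strategies: encodable by a finite memory structure. -/
def FinMemStrategy (σ : Strat S A) : Prop :=
  ∃ (Mem : Type) (_ : Finite Mem) (init : S → Mem) (upd : Mem → S → A → S → Mem)
    (nxt : Mem → S → A),
    ∀ h : S × List (A × S), σ h = nxt (updStar upd (init h.1) h.1 h.2) (lastState h.1 h.2)

/-- The joint run `α ⊙ ρ`. -/
def jointRun (s : S) (steps : List (A × S)) (ρ : ℕ → S × A) : ℕ → S × A :=
  fun i => if h : i < steps.length then (stateAt s steps i, (steps.get ⟨i, h⟩).1)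
           else ρ (i - steps.length)


section Aux
open CMDP
variable {S A : Type} [Fintype S]

/-- Segment of a run, as a list of steps. -/
def runSeg (ρ : ℕ → S × A) : ℕ → ℕ → List (A × S)
  | _, 0 => []
  | i, m + 1 => ((ρ i).2, (ρ (i + 1)).1) :: runSeg ρ (i + 1) m

lemma runSeg_eq (ρ : ℕ → S × A) : ∀ (m i : ℕ),
    runSeg ρ i m = (List.range m).map (fun k => ((ρ (i + k)).2, (ρ (i + k + 1)).1)) := by
  intro m
  induction m with
  | zero => intro i; rfl
  | succ m ih =>
    intro i
    rw [List.range_succ_eq_map, List.map_cons, List.map_map]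
    show ((ρ i).2, (ρ (i + 1)).1) :: runSeg ρ (i + 1) m = _
    rw [ih (i + 1)]
    have hfun : (fun k => ((ρ (i + 1 + k)).2, (ρ (i + 1 + k + 1)).1))
        = ((fun k => ((ρ (i + k)).2, (ρ (i + k + 1)).1)) ∘ Nat.succ) := by
      funext k
      show _ = ((ρ (i + Nat.succ k)).2, (ρ (i + Nat.succ k + 1)).1)
      rw [show i + 1 + k = i + Nat.succ k from by omega]
    rw [hfun]
    rfl

lemma prefixSteps_eq_runSeg (ρ : ℕ → S × A) (i : ℕ) :
    prefixSteps ρ i = runSeg ρ 0 i := by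
  rw [runSeg_eq]; simp [prefixSteps]

lemma lastState_runSeg (ρ : ℕ → S × A) : ∀ (m i : ℕ),
    lastState (ρ i).1 (runSeg ρ i m) = (ρ (i + m)).1 := by
  intro m
  induction m with
  | zero => intro i; rfl
  | succ m ih =>
    intro i
    rw [show i + (m + 1) = i + 1 + m from by omega]
    show lastState (ρ (i + 1)).1 (runSeg ρ (i + 1) m) = _
    exact ih (i + 1)

lemma valid_runSeg (M : CMDP S A) (ρ : ℕ → S × A) (hrun : M.IsRun ρ) : ∀ (m i : ℕ),
    M.ValidPath (ρ i).1 (runSeg ρ i m) := by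
  intro m
  induction m with
  | zero => intro i; trivial
  | succ m ih => intro i; exact ⟨hrun i, ih (i + 1)⟩

lemma consAux_runSeg (M : CMDP S A) (ρ : ℕ → S × A) : ∀ (m i : ℕ),
    M.consAux (ρ i).1 (runSeg ρ i m) = ∑ k ∈ Finset.range m, M.C (ρ (i + k)).1 (ρ (i + k)).2 := by
  intro m
  induction m with
  | zero => intro i; rfl
  | succ m ih =>
    intro i
    show M.C (ρ i).1 (ρ i).2 + M.consAux (ρ (i + 1)).1 (runSeg ρ (i + 1) m) = _
    have hsum2 : ∑ k ∈ Finset.range m, M.C (ρ (i + 1 + k)).1 (ρ (i + 1 + k)).2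
        = ∑ k ∈ Finset.range m, M.C (ρ (i + (k + 1))).1 (ρ (i + (k + 1))).2 := by
      apply Finset.sum_congr rfl
      intro k _
      rw [show i + (k + 1) = i + 1 + k from by omega]
    rw [ih (i + 1), hsum2, Finset.sum_range_succ']
    simp only [Nat.add_zero]
    omega

lemma sum_offset_le (g : ℕ → ℕ) (a b m : ℕ) (hbm : b ≤ m) :
    ∑ k ∈ Finset.range (b - a), g (a + k) ≤ ∑ k ∈ Finset.range m, g k := by
  rw [← Finset.sum_Ico_eq_sum_range]
  apply Finset.sum_le_sum_of_subset
  intro x hx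
  simp only [Finset.mem_Ico, Finset.mem_range] at *
  omega

lemma nodup_cycle_list (ρ : ℕ → S × A) (p m' : ℕ)
    (hinj : ∀ k₁ ∈ Finset.range (m' + 1), ∀ k₂ ∈ Finset.range (m' + 1),
      (ρ (p + k₁)).1 = (ρ (p + k₂)).1 → k₁ = k₂) :
    ((ρ p).1 :: ((runSeg ρ p (m' + 1)).map Prod.snd).dropLast).Nodup := by
  have h1 : (runSeg ρ p (m' + 1)).map Prod.snd
      = (List.range (m' + 1)).map (fun k => (ρ (p + k + 1)).1) := by
    rw [runSeg_eq, List.map_map]; rfl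
  have h2 : ((List.range (m' + 1)).map (fun k => (ρ (p + k + 1)).1)).dropLast
      = (List.range m').map (fun k => (ρ (p + k + 1)).1) := by
    rw [List.range_succ, List.map_append]
    simp
  have h3 : (ρ p).1 :: (List.range m').map (fun k => (ρ (p + k + 1)).1)
      = (List.range (m' + 1)).map (fun k => (ρ (p + k)).1) := by
    rw [List.range_succ_eq_map, List.map_cons, List.map_map]
    rfl
  rw [h1, h2, h3]
  refine List.Nodup.map_on ?_ List.nodup_range
  intro x hx y hy hxy
  exact hinj x (by simpa using List.mem_range.mp hx) y (by simpa using List.mem_range.mp hy) hxy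

lemma cycle_pos (M : CMDP S A) (hdec : M.Decreasing) (ρ : ℕ → S × A) (hrun : M.IsRun ρ) :
    ∀ m : ℕ, ∀ p : ℕ, 0 < m → (ρ (p + m)).1 = (ρ p).1 →
      0 < ∑ k ∈ Finset.range m, M.C (ρ (p + k)).1 (ρ (p + k)).2 := by
  intro m
  induction m using Nat.strong_induction_on with
  | _ m ih =>
  intro p hm hcyc
  by_cases hinj : ∀ k₁ ∈ Finset.range m, ∀ k₂ ∈ Finset.range m,
      (ρ (p + k₁)).1 = (ρ (p + k₂)).1 → k₁ = k₂
  · -- simple cycle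
    obtain ⟨m', rfl⟩ : ∃ m', m = m' + 1 := ⟨m - 1, by omega⟩
    have hpos := hdec (ρ p).1 (runSeg ρ p (m' + 1)) (valid_runSeg M ρ hrun (m' + 1) p)
      (by simp [runSeg])
      (by rw [lastState_runSeg]; exact hcyc)
      (nodup_cycle_list ρ p m' hinj)
    rwa [consAux_runSeg] at hpos
  · push_neg at hinj
    obtain ⟨k₁, hk₁, k₂, hk₂, heq, hne⟩ := hinj
    have key : ∀ a b : ℕ, a < b → b < m → (ρ (p + a)).1 = (ρ (p + b)).1 →
        0 < ∑ k ∈ Finset.range m, M.C (ρ (p + k)).1 (ρ (p + k)).2 := by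
      intro a b hab hbm hst
      have h1 := ih (b - a) (by omega) (p + a) (by omega)
        (by rw [show p + a + (b - a) = p + b by omega]; exact hst.symm)
      have h2 : ∑ k ∈ Finset.range (b - a),
          (fun k => M.C (ρ (p + k)).1 (ρ (p + k)).2) (a + k)
          ≤ ∑ k ∈ Finset.range m, M.C (ρ (p + k)).1 (ρ (p + k)).2 :=
        sum_offset_le (fun k => M.C (ρ (p + k)).1 (ρ (p + k)).2) a b m (le_of_lt hbm)
      simp only [← Nat.add_assoc] at h2
      exact lt_of_lt_of_le h1 h2
    rcases hne.lt_or_gt with h | h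
    · exact key k₁ k₂ h (Finset.mem_range.mp hk₂) heq
    · exact key k₂ k₁ h (Finset.mem_range.mp hk₁) heq.symm

lemma cycle_in_block (M : CMDP S A) (hdec : M.Decreasing) (ρ : ℕ → S × A) (hrun : M.IsRun ρ)
    (i a b B : ℕ) (hab : a < b) (hbB : b ≤ B) (hst : (ρ (i + a)).1 = (ρ (i + b)).1) :
    1 ≤ ∑ k ∈ Finset.range B, M.C (ρ (i + k)).1 (ρ (i + k)).2 := by
  have h1 := cycle_pos M hdec ρ hrun (b - a) (i + a) (by omega)
    (by rw [show i + a + (b - a) = i + b by omega]; exact hst.symm)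
  have h2 : ∑ k ∈ Finset.range (b - a),
      (fun k => M.C (ρ (i + k)).1 (ρ (i + k)).2) (a + k)
      ≤ ∑ k ∈ Finset.range B, M.C (ρ (i + k)).1 (ρ (i + k)).2 :=
    sum_offset_le (fun k => M.C (ρ (i + k)).1 (ρ (i + k)).2) a b B hbB
  simp only [← Nat.add_assoc] at h2
  exact lt_of_lt_of_le h1 h2

lemma energyFrom_nil (M : CMDP S A) (o : Option ℕ) (s : S) :
    M.energyFrom o s [] = o := by
  cases o <;> rfl

lemma energyFrom_append (M : CMDP S A) : ∀ (p : List (A × S)) (o : Option ℕ) (s : S)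
    (q : List (A × S)),
    M.energyFrom o s (p ++ q) = M.energyFrom (M.energyFrom o s p) (lastState s p) q := by
  intro p
  induction p with
  | nil => intro o s q; cases o <;> rfl
  | cons hd tl ih =>
    intro o s q
    cases o with
    | none => simp [CMDP.energyFrom]
    | some l =>
      obtain ⟨a, t⟩ := hd
      show M.energyFrom (M.levelStep s a l) t (tl ++ q) = _
      exact ih (M.levelStep s a l) t q

lemma prefixSteps_succ (ρ : ℕ → S × A) (i : ℕ) :
    prefixSteps ρ (i + 1) = prefixSteps ρ i ++ [((ρ i).2, (ρ (i + 1)).1)] := by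
  simp [prefixSteps, List.range_succ]

lemma lastState_prefix (ρ : ℕ → S × A) (i : ℕ) :
    lastState (runState ρ 0) (prefixSteps ρ i) = (ρ i).1 := by
  rw [prefixSteps_eq_runSeg]
  have := lastState_runSeg ρ i 0
  simpa [runState] using this

end Aux

end CMDP
open CMDP in
/-- In a decreasing CMDP, every `d`-safe run visits the reload states infinitely
many times. -/
theorem dsafe_run_visits_reload_infinitely {S A : Type} [Fintype S] (M : CMDP S A)
    (hdec : M.Decreasing) (d : ℕ) (ρ : ℕ → S × A)
    (hrun : M.IsRun ρ) (hsafe : M.DSafe d ρ) :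
    ∀ n : ℕ, ∃ i : ℕ, n ≤ i ∧ runState ρ i ∈ M.R := by
  intro n
  by_contra hcontra
  push_neg at hcontra
  simp only [CMDP.runState] at hcontra
  -- hcontra : ∀ i, n ≤ i → (ρ i).1 ∉ M.R
  simp only [CMDP.DSafe, CMDP.energy] at hsafe
  set e : ℕ → ℕ := fun i => (M.energyFrom (some d) (runState ρ 0) (prefixSteps ρ i)).getD 0
    with he
  have hEe : ∀ i, M.energyFrom (some d) (runState ρ 0) (prefixSteps ρ i) = some (e i) := by
    intro i
    cases h : M.energyFrom (some d) (runState ρ 0) (prefixSteps ρ i) with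
    | none => exact absurd h (hsafe i)
    | some l => simp [he, h]
  have hstep : ∀ i, n ≤ i → e (i + 1) + M.C (ρ i).1 (ρ i).2 = e i := by
    intro i hi
    have h1 := hEe (i + 1)
    rw [prefixSteps_succ, energyFrom_append, hEe i, lastState_prefix] at h1
    rw [show M.energyFrom (some (e i)) (ρ i).1 [((ρ i).2, (ρ (i + 1)).1)]
        = M.energyFrom (M.levelStep (ρ i).1 (ρ i).2 (e i)) (ρ (i + 1)).1 [] from rfl,
      energyFrom_nil] at h1
    rw [CMDP.levelStep, if_neg (hcontra i hi)] at h1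
    by_cases hC : M.C (ρ i).1 (ρ i).2 ≤ e i
    · rw [if_pos hC] at h1
      have := Option.some.inj h1
      omega
    · rw [if_neg hC] at h1
      exact absurd h1 (by simp)
  have hsum : ∀ m, e (n + m) + ∑ k ∈ Finset.range m, M.C (ρ (n + k)).1 (ρ (n + k)).2 = e n := by
    intro m
    induction m with
    | zero => simp
    | succ m ih =>
      rw [Finset.sum_range_succ]
      have h2 := hstep (n + m) (by omega)
      have h3 : n + (m + 1) = n + m + 1 := rfl
      rw [h3]
      omega
  have hS : Nonempty S := ⟨(ρ 0).1⟩
  set B := Fintype.card S with hB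
  have hblock : ∀ i, 1 ≤ ∑ k ∈ Finset.range B, M.C (ρ (i + k)).1 (ρ (i + k)).2 := by
    intro i
    obtain ⟨x, hx, y, hy, hxy, hfeq⟩ := Finset.exists_ne_map_eq_of_card_lt_of_maps_to
      (s := Finset.range (B + 1)) (t := (Finset.univ : Finset S))
      (by simp [hB]) (fun a _ => Finset.mem_univ ((ρ (i + a)).1))
    rcases hxy.lt_or_gt with h | h
    · exact cycle_in_block M hdec ρ hrun i x y B h (Nat.lt_succ_iff.mp (Finset.mem_range.mp hy)) hfeq
    · exact cycle_in_block M hdec ρ hrun i y x B h (Nat.lt_succ_iff.mp (Finset.mem_range.mp hx)) hfeq.symm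
  have hmain : ∀ m, m ≤ ∑ k ∈ Finset.range (m * B), M.C (ρ (n + k)).1 (ρ (n + k)).2 := by
    intro m
    induction m with
    | zero => simp
    | succ m ih =>
      have h4 : (m + 1) * B = m * B + B := by ring
      rw [h4, Finset.sum_range_add]
      have h5 := hblock (n + m * B)
      have h6 : ∑ k ∈ Finset.range B, M.C (ρ (n + m * B + k)).1 (ρ (n + m * B + k)).2
          = ∑ k ∈ Finset.range B, M.C (ρ (n + (m * B + k))).1 (ρ (n + (m * B + k))).2 := by
        apply Finset.sum_congr rfl
        intro k _
        rw [show n + (m * B + k) = n + m * B + k from by omega]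
      rw [h6] at h5
      omega
  have h1 := hsum ((e n + 1) * B)
  have h2 := hmain (e n + 1)
  omega
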